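/- Let Γ = (V, E, μ) be a connected truncated graph with p vertices, incidence matrix B_Γ, and signless edge-based Laplacian A_Γ := B_Γ B_Γᵀ ∈ Mat_{E×E}(ℤ). Then the rank of A_Γ equals p − bc(Γ), where bc(Γ) ∈ {0,1} equals 1 if Γ is bipartite without truncated edges and 0 otherwise. -/

import Mathlib

/-- A truncated graph `Γ = (V, E, μ)`: finite sets of vertices `V` and edges `E`
together with a multiplicity map `μ : E → V → ℕ` such that every edge has total
multiplicity `1` (a truncated edge) or `2` (an ordinary edge or a loop). -/
structure TruncGraph (V E : Type) [Fintype V] where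
  /-- multiplicity of a vertex in an edge -/
  μ : E → V → ℕ
  total_deg : ∀ e : E, (∑ v, μ e v) = 1 ∨ (∑ v, μ e v) = 2

namespace TruncGraph

variable {V E : Type} [Fintype V] [Fintype E] (Γ : TruncGraph V E)

/-- An edge `e` is incident to a vertex `v` if `μ e v ≠ 0`. -/
def Incid (e : E) (v : V) : Prop := Γ.μ e v ≠ 0

/-- A loop: an edge with multiplicity `2` at some vertex. -/
def IsLoop (e : E) : Prop := ∃ v : V, Γ.μ e v = 2

/-- A truncated edge: total multiplicity `1`. -/
def IsTrunc (e : E) : Prop := (∑ v, Γ.μ e v) = 1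

/-- An ordinary edge: neither a loop nor a truncated edge
(equivalently, incident to exactly two distinct vertices with multiplicity one each). -/
def IsOrd (e : E) : Prop := ¬ Γ.IsLoop e ∧ ¬ Γ.IsTrunc e

/-- Two vertices are adjacent if some edge is incident to both. -/
def Adj (v w : V) : Prop := ∃ e : E, Γ.Incid e v ∧ Γ.Incid e w

/-- Connectivity: the reflexive-transitive closure of adjacency. -/
def Conn (v w : V) : Prop := Relation.ReflTransGen Γ.Adj v w

/-- `Γ` is connected. -/
def IsConnected : Prop := ∀ v w : V, Γ.Conn v w

/-- The edge `e` joins the vertices `a` and `b` (for a loop, `a = b`;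
truncated edges join no pair of vertices). -/
def Joins (e : E) (a b : V) : Prop :=
  Γ.Incid e a ∧ Γ.Incid e b ∧ (a = b → Γ.μ e a = 2)

/-- `Γ` contains a cycle of odd length: a closed walk with an odd number of pairwise
distinct non-truncated edges (a loop counts as a cycle of length `1`). -/
def HasOddCycle : Prop :=
  ∃ ℓ : ℕ, Odd ℓ ∧ ∃ (v : ℕ → V) (e : ℕ → E), v 0 = v ℓ ∧
    (∀ i j : ℕ, i < ℓ → j < ℓ → e i = e j → i = j) ∧
    ∀ i : ℕ, i < ℓ → Γ.Joins (e i) (v i) (v (i + 1))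

/-- The edge-vertex incidence matrix `B_Γ ∈ Mat_{E×V}(ℤ)`. -/
def B : Matrix E V ℤ := fun e v => (Γ.μ e v : ℤ)

/-- Connectivity through ordinary edges only. -/
def ConnOrd (v w : V) : Prop :=
  Relation.ReflTransGen (fun x y : V => ∃ e : E, Γ.IsOrd e ∧ Γ.Incid e x ∧ Γ.Incid e y) v w

/-- `Γ` is a tree with a unique truncated edge: connected, no loops, exactly one
truncated edge, and the ordinary edges form a tree on `V` (they connect `V` and number
`|V| − 1`); in particular `|E| = |V|`. -/
def IsTreeWithUniqueTruncEdge : Prop :=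
  Γ.IsConnected ∧ (∀ e : E, ¬ Γ.IsLoop e) ∧ (∃! e : E, Γ.IsTrunc e) ∧
    (∀ v w : V, Γ.ConnOrd v w) ∧
    Nat.card {e : E // Γ.IsOrd e} + 1 = Fintype.card V

/-- `Γ` is a tree without truncated edges: connected, no loops, no truncated edges,
and `|E| = |V| − 1`. -/
def IsTreeNoTruncEdge : Prop :=
  Γ.IsConnected ∧ (∀ e : E, ¬ Γ.IsLoop e) ∧ (∀ e : E, ¬ Γ.IsTrunc e) ∧
    Fintype.card E + 1 = Fintype.card V

/-- `Γ` is bipartite without truncated edges: it has no loops and no truncated edges,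
and admits a `2`-coloring of its vertices such that every edge is incident to vertices
of both colors. -/
def IsBipartiteNoTrunc : Prop :=
  (∀ e : E, ¬ Γ.IsLoop e) ∧ (∀ e : E, ¬ Γ.IsTrunc e) ∧
    ∃ c : V → Bool, ∀ (e : E) (v w : V), Γ.Incid e v → Γ.Incid e w → v ≠ w → c v ≠ c w

/-- The component of `v` is bipartite without truncated edges: no loop or truncated edge
is incident to a vertex of the component of `v`, and there is a `2`-coloring of the
vertices such that every edge of the component joins vertices of different colors. -/
def GoodCompAt (v : V) : Prop :=
  (∀ (e : E) (w : V), Γ.Conn v w → Γ.Incid e w → ¬ Γ.IsLoop e ∧ ¬ Γ.IsTrunc e) ∧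
    ∃ c : V → Bool, ∀ (e : E) (w w' : V),
      Γ.Conn v w → Γ.Incid e w → Γ.Incid e w' → w ≠ w' → c w ≠ c w'

/-- `bc(Γ)`: the number of connected components of `Γ` which are bipartite without
truncated edges (components are realized as classes of the quotient of `V` by the
equivalence relation generated by adjacency). -/
noncomputable def bc : ℕ :=
  Set.ncard {q : Quot Γ.Adj | ∃ v : V, q = Quot.mk Γ.Adj v ∧ Γ.GoodCompAt v}

end TruncGraph

set_option linter.unusedTactic false
set_option linter.unusedSectionVars false
section Bridge

open Matrix

private lemma exists_int_smul' {n' : Type} [Fintype n'] [DecidableEq n'] (q : n' → ℚ) :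
    ∃ s : ℤ, s ≠ 0 ∧ ∀ i, ∃ z : ℤ, (z : ℚ) = (s : ℚ) * q i := by
  classical
  refine ⟨(∏ j, ((q j).den : ℤ)), ?_, ?_⟩
  · exact Finset.prod_ne_zero_iff.2 fun j _ => Int.natCast_ne_zero.2 (q j).den_nz
  · intro i
    refine ⟨(q i).num * ∏ j ∈ Finset.univ.erase i, ((q j).den : ℤ), ?_⟩
    have h1 : (∏ j, ((q j).den : ℤ))
        = ((q i).den : ℤ) * ∏ j ∈ Finset.univ.erase i, ((q j).den : ℤ) :=
      (Finset.mul_prod_erase _ _ (Finset.mem_univ i)).symm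
    rw [h1]
    push_cast
    rw [mul_assoc, mul_comm ((∏ j ∈ Finset.univ.erase i, ((q j).den : ℚ))) (q i),
      ← mul_assoc, mul_comm ((q i).den : ℚ) (q i), Rat.mul_den_eq_num]

private noncomputable def castLin (m : Type) [Fintype m] : (m → ℤ) →ₗ[ℤ] (m → ℚ) where
  toFun x i := (x i : ℚ)
  map_add' x y := by ext i; simp
  map_smul' z x := by ext i; simp

private lemma castLin_mulVec {m n : Type} [Fintype m] [Fintype n]
    (A : Matrix m n ℤ) (x : n → ℤ) :
    castLin m (A *ᵥ x) = (A.map ((↑) : ℤ → ℚ)) *ᵥ (castLin n x) := by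
  ext i
  exact (Int.castRingHom ℚ).map_mulVec A x i

private lemma rank_int_rat {m n : Type} [Fintype m] [Fintype n] [DecidableEq n]
    (A : Matrix m n ℤ) :
    A.rank = (A.map ((↑) : ℤ → ℚ)).rank := by
  classical
  set A' := A.map ((↑) : ℤ → ℚ) with hA'
  set M := LinearMap.range A.mulVecLin with hM
  set N := LinearMap.range A'.mulVecLin with hN
  have hmem : ∀ x : M, castLin m x.1 ∈ N := by
    rintro ⟨_, x, rfl⟩
    exact ⟨castLin n x, (castLin_mulVec A x).symm⟩
  let f : M →ₗ[ℤ] N :=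
    { toFun := fun x => ⟨castLin m x.1, hmem x⟩
      map_add' := by intro x y; ext j; simp
      map_smul' := by
        intro z x; ext j
        show ((z • (x : m → ℤ)) j : ℚ) = z • ((x : m → ℤ) j : ℚ)
        simp }
  have hcast : ∀ (s : ℤ) (x : N), s • x = ((s : ℚ)) • x := fun s x =>
    (Int.cast_smul_eq_zsmul ℚ s x).symm
  have hloc : IsLocalizedModule (nonZeroDivisors ℤ) f := by
    constructor
    · intro s
      have hs : ((s : ℤ) : ℚ) ≠ 0 := Int.cast_ne_zero.2 (nonZeroDivisors.coe_ne_zero s)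
      rw [Module.End.isUnit_iff, Function.bijective_iff_has_inverse]
      refine ⟨fun y => (((s : ℤ) : ℚ))⁻¹ • y, fun x => ?_, fun x => ?_⟩ <;>
        simp only [Module.algebraMap_end_apply, hcast] <;>
        [rw [inv_smul_smul₀ hs]; rw [smul_inv_smul₀ hs]]
    · rintro ⟨y, q, rfl⟩
      obtain ⟨s, hs0, hz⟩ := exists_int_smul' q
      choose z hzz using hz
      refine ⟨⟨⟨A *ᵥ z, ⟨z, rfl⟩⟩, ⟨s, mem_nonZeroDivisors_of_ne_zero hs0⟩⟩, ?_⟩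
      apply Subtype.ext
      show s • (A' *ᵥ q) = castLin m (A *ᵥ z)
      rw [castLin_mulVec]
      have hq : castLin n z = (s : ℚ) • q := by
        ext i; exact (hzz i).trans rfl
      rw [hq, Matrix.mulVec_smul]
      exact (Int.cast_smul_eq_zsmul ℚ s _).symm
    · intro x y h
      refine ⟨1, ?_⟩
      have h2 : castLin m x.1 = castLin m y.1 := congrArg Subtype.val h
      have h3 : x.1 = y.1 := by
        ext i
        have h4 : ((x.1 i : ℚ)) = (y.1 i : ℚ) := congrFun h2 i
        exact_mod_cast h4
      simp [Subtype.ext h3]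
  have hr := (IsLocalization.rank_eq (R := ℤ) (N := N) ℚ (nonZeroDivisors ℤ) le_rfl).trans
    (haveI := hloc; IsLocalizedModule.rank_eq (nonZeroDivisors ℤ) le_rfl f)
  rw [Matrix.rank, Matrix.rank, Module.finrank, Module.finrank, ← hM, ← hN, hr]

end Bridge

namespace TruncGraph

open Matrix

variable {V E : Type} [Fintype V] [Fintype E] [DecidableEq V] [DecidableEq E]
  (Γ : TruncGraph V E)

/-- The rational incidence matrix. -/
private noncomputable def Q : Matrix E V ℚ := Γ.B.map ((↑) : ℤ → ℚ)

private lemma Q_apply (e : E) (v : V) : Γ.Q e v = (Γ.μ e v : ℚ) := rfl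

private lemma mem_ker_iff (x : V → ℚ) :
    x ∈ LinearMap.ker Γ.Q.mulVecLin ↔ ∀ e : E, ∑ u, (Γ.μ e u : ℚ) * x u = 0 := by
  constructor
  · intro hx e
    have h := congrFun (LinearMap.mem_ker.mp hx) e
    simpa [Matrix.mulVecLin_apply, Matrix.mulVec, dotProduct, Q_apply] using h
  · intro h
    apply LinearMap.mem_ker.mpr
    funext e
    simpa [Matrix.mulVecLin_apply, Matrix.mulVec, dotProduct, Q_apply] using h e

/-- Structure of an edge incident to two distinct vertices. -/
private lemma edge_two {e : E} {v w : V} (hvw : v ≠ w)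
    (hv : Γ.Incid e v) (hw : Γ.Incid e w) :
    Γ.μ e v = 1 ∧ Γ.μ e w = 1 ∧ ∀ u, u ≠ v → u ≠ w → Γ.μ e u = 0 := by
  have hv1 : 1 ≤ Γ.μ e v := Nat.one_le_iff_ne_zero.2 hv
  have hw1 : 1 ≤ Γ.μ e w := Nat.one_le_iff_ne_zero.2 hw
  have hpair : ∑ u ∈ {v, w}, Γ.μ e u = Γ.μ e v + Γ.μ e w := Finset.sum_pair hvw
  have hle : ∑ u ∈ {v, w}, Γ.μ e u ≤ ∑ u, Γ.μ e u :=
    Finset.sum_le_sum_of_subset (Finset.subset_univ _)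
  have htot : (∑ u, Γ.μ e u) = 2 := by
    rcases Γ.total_deg e with h | h
    · omega
    · exact h
  have hsd : ∑ u ∈ Finset.univ \ {v, w}, Γ.μ e u + ∑ u ∈ {v, w}, Γ.μ e u
      = ∑ u, Γ.μ e u := Finset.sum_sdiff (Finset.subset_univ _)
  have hvw1 : Γ.μ e v = 1 ∧ Γ.μ e w = 1 := by omega
  refine ⟨hvw1.1, hvw1.2, fun u hu1 hu2 => ?_⟩
  have hz : ∑ u ∈ Finset.univ \ {v, w}, Γ.μ e u = 0 := by omega
  refine (Finset.sum_eq_zero_iff).1 hz u ?_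
  simp [hu1, hu2]

/-- The row of the kernel condition for an edge incident to two distinct vertices. -/
private lemma pair_sum (x : V → ℚ) {e : E} {v w : V} (hvw : v ≠ w)
    (hv : Γ.Incid e v) (hw : Γ.Incid e w) :
    ∑ u, (Γ.μ e u : ℚ) * x u = x v + x w := by
  obtain ⟨h1, h2, h0⟩ := Γ.edge_two hvw hv hw
  have hsub : ∑ u ∈ {v, w}, (Γ.μ e u : ℚ) * x u = ∑ u, (Γ.μ e u : ℚ) * x u := by
    apply Finset.sum_subset (Finset.subset_univ _)
    intro u _ hu
    simp only [Finset.mem_insert, Finset.mem_singleton] at hu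
    push_neg at hu
    rw [h0 u hu.1 hu.2]
    simp
  rw [← hsub, Finset.sum_pair hvw, h1, h2]
  push_cast
  ring

/-- Zero propagation along connectivity. -/
private lemma zero_prop {x : V → ℚ} (hx : ∀ e : E, ∑ u, (Γ.μ e u : ℚ) * x u = 0)
    {v w : V} (hc : Γ.Conn v w) (h0 : x v = 0) : x w = 0 := by
  induction hc with
  | refl => exact h0
  | @tail b c hab hbc ih =>
    obtain ⟨e, hb, hc'⟩ := hbc
    by_cases h : b = c
    · rwa [← h]
    · have := Γ.pair_sum x h hb hc'
      rw [hx e] at this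
      linarith [ih]

/-- In a connected graph, a nonzero kernel vector is nowhere zero. -/
private lemma all_ne (hconn : Γ.IsConnected) {x : V → ℚ}
    (hx : ∀ e : E, ∑ u, (Γ.μ e u : ℚ) * x u = 0) (hx0 : x ≠ 0) :
    ∀ w, x w ≠ 0 := by
  obtain ⟨v0, hv0⟩ := Function.ne_iff.1 hx0
  intro w hw
  exact hv0 (Γ.zero_prop hx (hconn w v0) hw)

/-- A nonzero kernel vector on a connected graph forces bipartite without truncated edges. -/
private lemma bip_of_ker (hconn : Γ.IsConnected) {x : V → ℚ}
    (hx : ∀ e : E, ∑ u, (Γ.μ e u : ℚ) * x u = 0) (hx0 : x ≠ 0) :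
    Γ.IsBipartiteNoTrunc := by
  have hne := Γ.all_ne hconn hx hx0
  refine ⟨?_, ?_, ⟨fun v => decide (0 < x v), ?_⟩⟩
  · rintro e ⟨v, hv2⟩
    have htot : (∑ u, Γ.μ e u) = 2 := by
      have hle : Γ.μ e v ≤ ∑ u, Γ.μ e u := Finset.single_le_sum (fun _ _ => Nat.zero_le _)
        (Finset.mem_univ v)
      rcases Γ.total_deg e with h | h
      · omega
      · exact h
    have hrest : ∀ u, u ≠ v → Γ.μ e u = 0 := by
      intro u hu
      have hsd : ∑ u ∈ Finset.univ \ {v}, Γ.μ e u + ∑ u ∈ {v}, Γ.μ e u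
          = ∑ u, Γ.μ e u := Finset.sum_sdiff (Finset.subset_univ _)
      rw [Finset.sum_singleton, hv2, htot] at hsd
      have hz : ∑ u ∈ Finset.univ \ {v}, Γ.μ e u = 0 := by omega
      exact (Finset.sum_eq_zero_iff).1 hz u (by simp [hu])
    have hrow : ∑ u, (Γ.μ e u : ℚ) * x u = 2 * x v := by
      have hsub : ∑ u ∈ {v}, (Γ.μ e u : ℚ) * x u = ∑ u, (Γ.μ e u : ℚ) * x u := by
        apply Finset.sum_subset (Finset.subset_univ _)
        intro u _ hu
        simp only [Finset.mem_singleton] at hu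
        rw [hrest u hu]; simp
      rw [← hsub, Finset.sum_singleton, hv2]
      push_cast; ring
    have := hx e
    rw [hrow] at this
    exact hne v (by linarith)
  · intro e he
    have htot : (∑ u, Γ.μ e u) = 1 := he
    obtain ⟨v, -, hv⟩ : ∃ v ∈ Finset.univ, Γ.μ e v ≠ 0 := by
      by_contra h
      push_neg at h
      rw [Finset.sum_eq_zero fun u hu => h u hu] at htot
      omega
    have hle : Γ.μ e v ≤ 1 := htot ▸ Finset.single_le_sum (fun _ _ => Nat.zero_le _)
      (Finset.mem_univ v)
    have hv1 : Γ.μ e v = 1 := by omega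
    have hrest : ∀ u, u ≠ v → Γ.μ e u = 0 := by
      intro u hu
      have hsd : ∑ u ∈ Finset.univ \ {v}, Γ.μ e u + ∑ u ∈ {v}, Γ.μ e u
          = ∑ u, Γ.μ e u := Finset.sum_sdiff (Finset.subset_univ _)
      rw [Finset.sum_singleton, hv1, htot] at hsd
      have hz : ∑ u ∈ Finset.univ \ {v}, Γ.μ e u = 0 := by omega
      exact (Finset.sum_eq_zero_iff).1 hz u (by simp [hu])
    have hrow : ∑ u, (Γ.μ e u : ℚ) * x u = x v := by
      have hsub : ∑ u ∈ {v}, (Γ.μ e u : ℚ) * x u = ∑ u, (Γ.μ e u : ℚ) * x u := by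
        apply Finset.sum_subset (Finset.subset_univ _)
        intro u _ hu
        simp only [Finset.mem_singleton] at hu
        rw [hrest u hu]; simp
      rw [← hsub, Finset.sum_singleton, hv1]
      push_cast; ring
    have := hx e
    rw [hrow] at this
    exact hne v this
  · intro e v w hv hw hvw
    have hsum := Γ.pair_sum x hvw hv hw
    rw [hx e] at hsum
    have hxv := hne v
    have hxw := hne w
    rw [ne_eq, decide_eq_decide]
    intro hiff
    rcases lt_trichotomy (x v) 0 with h | h | h
    · have : 0 < x w := by linarith
      have := hiff.mpr this
      linarith
    · exact hxv h
    · have := hiff.mp h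
      linarith

/-- Structure of an ordinary edge: two distinct incident vertices. -/
private lemma ord_struct {e : E} (hl : ¬ Γ.IsLoop e) (ht : ¬ Γ.IsTrunc e) :
    ∃ v w : V, v ≠ w ∧ Γ.Incid e v ∧ Γ.Incid e w := by
  have htot : (∑ u, Γ.μ e u) = 2 := by
    rcases Γ.total_deg e with h | h
    · exact absurd h ht
    · exact h
  obtain ⟨v, -, hv⟩ : ∃ v ∈ Finset.univ, Γ.μ e v ≠ 0 := by
    by_contra h
    push_neg at h
    rw [Finset.sum_eq_zero fun u hu => h u hu] at htot
    omega
  have hle : Γ.μ e v ≤ 2 := htot ▸ Finset.single_le_sum (fun _ _ => Nat.zero_le _)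
    (Finset.mem_univ v)
  have hv1 : Γ.μ e v = 1 := by
    rcases Nat.lt_or_ge (Γ.μ e v) 2 with h | h
    · omega
    · exact absurd ⟨v, by omega⟩ hl
  have hsd : ∑ u ∈ Finset.univ \ {v}, Γ.μ e u + ∑ u ∈ {v}, Γ.μ e u
      = ∑ u, Γ.μ e u := Finset.sum_sdiff (Finset.subset_univ _)
  rw [Finset.sum_singleton, hv1, htot] at hsd
  obtain ⟨w, hw, hw0⟩ : ∃ w ∈ Finset.univ \ {v}, Γ.μ e w ≠ 0 := by
    by_contra h
    push_neg at h
    rw [Finset.sum_eq_zero fun u hu => h u hu] at hsd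
    omega
  refine ⟨v, w, ?_, hv, hw0⟩
  intro hvw
  simp [← hvw] at hw

/-- The candidate kernel vector from a coloring. -/
private noncomputable def chi (c : V → Bool) : V → ℚ := fun v => if c v then 1 else -1

private lemma chi_ker (c : V → Bool)
    (hl : ∀ e : E, ¬ Γ.IsLoop e) (ht : ∀ e : E, ¬ Γ.IsTrunc e)
    (hc : ∀ (e : E) (v w : V), Γ.Incid e v → Γ.Incid e w → v ≠ w → c v ≠ c w) :
    ∀ e : E, ∑ u, (Γ.μ e u : ℚ) * chi c u = 0 := by
  intro e
  obtain ⟨v, w, hvw, hv, hw⟩ := Γ.ord_struct (hl e) (ht e)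
  rw [Γ.pair_sum (chi c) hvw hv hw]
  have := hc e v w hv hw hvw
  unfold chi
  cases hcv : c v <;> cases hcw : c w <;> simp [hcv, hcw] at this ⊢

private lemma chi_ne_zero (c : V → Bool) [Nonempty V] : chi c ≠ 0 := by
  intro h
  obtain ⟨v⟩ := ‹Nonempty V›
  have := congrFun h v
  unfold chi at this
  cases hcv : c v <;> simp [hcv] at this

/-- Any kernel vector is a multiple of `chi c`. -/
private lemma ker_eq_span (hconn : Γ.IsConnected) [Nonempty V] (c : V → Bool)
    (hl : ∀ e : E, ¬ Γ.IsLoop e) (ht : ∀ e : E, ¬ Γ.IsTrunc e)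
    (hc : ∀ (e : E) (v w : V), Γ.Incid e v → Γ.Incid e w → v ≠ w → c v ≠ c w) :
    LinearMap.ker Γ.Q.mulVecLin = Submodule.span ℚ {chi c} := by
  obtain ⟨v0⟩ := ‹Nonempty V›
  apply le_antisymm
  · intro x hx
    rw [Submodule.mem_span_singleton]
    refine ⟨x v0 * chi c v0, ?_⟩
    have hz : (x - (x v0 * chi c v0) • chi c) ∈ LinearMap.ker Γ.Q.mulVecLin := by
      refine Submodule.sub_mem _ hx (Submodule.smul_mem _ _ ?_)
      exact (Γ.mem_ker_iff _).2 (Γ.chi_ker c hl ht hc)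
    have hz0 : (x - (x v0 * chi c v0) • chi c) v0 = 0 := by
      have hsq : chi c v0 * chi c v0 = 1 := by
        unfold chi; cases hcv : c v0 <;> simp [hcv]
      simp only [Pi.sub_apply, Pi.smul_apply, smul_eq_mul]
      rw [mul_assoc, hsq, mul_one, sub_self]
    have hall : ∀ w, (x - (x v0 * chi c v0) • chi c) w = 0 := fun w =>
      Γ.zero_prop ((Γ.mem_ker_iff _).1 hz) (hconn v0 w) hz0
    funext w
    have := hall w
    simp only [Pi.sub_apply, Pi.smul_apply, smul_eq_mul] at this ⊢
    linarith
  · rw [Submodule.span_le, Set.singleton_subset_iff]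
    exact (Γ.mem_ker_iff _).2 (Γ.chi_ker c hl ht hc)

private lemma rank_Q_add :
    Γ.Q.rank + Module.finrank ℚ (LinearMap.ker Γ.Q.mulVecLin) = Fintype.card V := by
  rw [Matrix.rank]
  rw [LinearMap.finrank_range_add_finrank_ker Γ.Q.mulVecLin]
  simp [Module.finrank_pi]

end TruncGraph

/-- let `Γ` be a connected truncated graph with `p` vertices, incidence
matrix `B_Γ` and signless edge-based Laplacian `A_Γ = B_Γ B_Γᵀ`.  Then
`rank A_Γ = p − bc(Γ)`, where `bc(Γ) ∈ {0, 1}` is `1` if `Γ` is bipartite without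
truncated edges and `0` otherwise. -/
theorem stmt13 {V E : Type} [Fintype V] [Fintype E] [DecidableEq V] [DecidableEq E]
    (Γ : TruncGraph V E) (hconn : Γ.IsConnected) :
    (Γ.IsBipartiteNoTrunc → (Γ.B * Γ.B.transpose).rank = Fintype.card V - 1) ∧
      (¬ Γ.IsBipartiteNoTrunc → (Γ.B * Γ.B.transpose).rank = Fintype.card V) := by
  classical
  have hkey : (Γ.B * Γ.B.transpose).rank = Γ.Q.rank := by
    rw [rank_int_rat]
    have hmap : (Γ.B * Γ.B.transpose).map ((↑) : ℤ → ℚ) = Γ.Q * Γ.Q.transpose := by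
      show (Γ.B * Γ.B.transpose).map (Int.castRingHom ℚ) = _
      rw [Matrix.map_mul (f := Int.castRingHom ℚ), Matrix.transpose_map]
      rfl
    rw [hmap, Matrix.rank_self_mul_transpose]
  have hrn := Γ.rank_Q_add
  constructor
  · rintro ⟨hl, ht, c, hc⟩
    rcases isEmpty_or_nonempty V with hV | hV
    · have hcard : Fintype.card V = 0 := Fintype.card_eq_zero
      omega
    · have hker : Module.finrank ℚ (LinearMap.ker Γ.Q.mulVecLin) = 1 := by
        rw [Γ.ker_eq_span hconn c hl ht hc, finrank_span_singleton (TruncGraph.chi_ne_zero c)]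
      omega
  · intro hbip
    have hker : LinearMap.ker Γ.Q.mulVecLin = ⊥ := by
      rw [eq_bot_iff]
      intro x hx
      by_contra h
      have hx0 : x ≠ 0 := by simpa using h
      exact hbip (Γ.bip_of_ker hconn ((Γ.mem_ker_iff x).1 hx) hx0)
    rw [hker] at hrn
    simp only [finrank_bot] at hrn
    omega
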